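/- Let α ∈ Λ^{p,0}V* and write α = ι(a) + i·ι(b) with a, b ∈ Λ^{p,0}V'. Then for η = (−1)^{p(p−1)/2} α ∧ i^p ᾱ ∈ Λ^{p,p}V*, one has η + F(η) = 2·ι((−1)^{p(p−1)/2}(a∧J(a) + b∧J(b))); in particular η + F(η) is the image under ι of a positive Lagerberg form. -/

import Mathlib

/- Setup: `V = ℝⁿ` with its standard basis, `V_ℂ` its complexification,
`V* = Hom_ℝ(V,ℂ)` and `V̄*` the antilinear maps `V_ℂ → ℂ`.  The bigraded exterior algebra
`Λ^{·,·}V* = Λ_ℂ(V* ⊕ V̄*)` is modeled as the exterior algebra over `ℂ` of the free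
complex module on the `2n` generators `du_1,…,du_n` (first summand) and
`dū_1,…,dū_n` (second summand). -/

noncomputable section
open ExteriorAlgebra

/-- The algebra `Λ^{·,·}V* = Λ_ℂ(V* ⊕ V̄*)` for `V = ℝⁿ`. -/
abbrev CForms (n : ℕ) : Type := ExteriorAlgebra ℂ ((Fin n ⊕ Fin n) → ℂ)

/-- The basis element `du_i` of `V*`. -/
def cdu {n : ℕ} (i : Fin n) : CForms n := ExteriorAlgebra.ι ℂ (Pi.single (Sum.inl i) (1 : ℂ))

/-- The basis element `dū_i` of `V̄*`. -/
def cdub {n : ℕ} (i : Fin n) : CForms n := ExteriorAlgebra.ι ℂ (Pi.single (Sum.inr i) (1 : ℂ))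

/-- A general element `Σ cᵢ • du_i` of `V*`. -/
def cOne {n : ℕ} (c : Fin n → ℂ) : CForms n := ∑ i, c i • cdu i

/-- A general element `Σ cᵢ • dū_i` of `V̄*`. -/
def cOneBar {n : ℕ} (c : Fin n → ℂ) : CForms n := ∑ i, c i • cdub i

/-- The conjugate `ᾱ = Σ c̄ᵢ • dū_i ∈ V̄*` of the one-form `α = Σ cᵢ • du_i ∈ V*`. -/
def cConjOne {n : ℕ} (c : Fin n → ℂ) : CForms n := ∑ i, (starRingEnd ℂ) (c i) • cdub i

/-- A decomposable `(p,0)`-form `α₁ ∧ … ∧ α_p` with `α_j ∈ V*`. -/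
def cDecomp {n p : ℕ} (c : Fin p → Fin n → ℂ) : CForms n := (List.ofFn fun j => cOne (c j)).prod

/-- The conjugate `ᾱ₁ ∧ … ∧ ᾱ_p` of the decomposable `(p,0)`-form given by `c`. -/
def cDecompBar {n p : ℕ} (c : Fin p → Fin n → ℂ) : CForms n :=
  (List.ofFn fun j => cConjOne (c j)).prod

/-- `Λ^{p,q}V*`: the span of products of `p` elements of `V*` and `q` elements of `V̄*`. -/
def CFormsPQ (n p q : ℕ) : Submodule ℂ (CForms n) :=
  Submodule.span ℂ { x | ∃ (a : Fin p → Fin n → ℂ) (b : Fin q → Fin n → ℂ),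
    x = cDecomp a * (List.ofFn fun j => cOneBar (b j)).prod }

/-- The convex cone generated by a set `S` (nonnegative real coefficients). -/
def realCone {n : ℕ} (S : Set (CForms n)) : Set (CForms n) :=
  { x | ∃ (m : ℕ) (t : Fin m → ℝ) (y : Fin m → CForms n),
      (∀ k, 0 ≤ t k) ∧ (∀ k, y k ∈ S) ∧ x = ∑ k, (t k : ℂ) • y k }

/-- The generators `α₁ ∧ iᾱ₁ ∧ … ∧ α_p ∧ iᾱ_p` (`α_j ∈ V*`) of the strongly positive cone. -/
def cStrongGen (n p : ℕ) : Set (CForms n) :=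
  { x | ∃ c : Fin p → Fin n → ℂ,
      x = (List.ofFn fun j => cOne (c j) * (Complex.I • cConjOne (c j))).prod }

/-- The cone `Λ^{p,p}_{+,s}V*` of strongly positive `(p,p)`-forms. -/
def cStrongPos (n p : ℕ) : Set (CForms n) := realCone (cStrongGen n p)

/-- The generators `i^{p²} α ∧ ᾱ` (`α ∈ Λ^{p,0}V*`, written as a sum of decomposables)
of the positive cone. -/
def cPosGen (n p : ℕ) : Set (CForms n) :=
  { x | ∃ (m : ℕ) (c : Fin m → Fin p → Fin n → ℂ),
      x = Complex.I ^ (p ^ 2) • ((∑ l, cDecomp (c l)) * (∑ l, cDecompBar (c l))) }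

/-- The cone `Λ^{p,p}_{+}V*` of positive `(p,p)`-forms. -/
def cPos (n p : ℕ) : Set (CForms n) := realCone (cPosGen n p)

/-- The canonical orientation form `ω_n = du_1 ∧ i dū_1 ∧ … ∧ du_n ∧ i dū_n`. -/
def cOmegaTop (n : ℕ) : CForms n := (List.ofFn fun i : Fin n => cdu i * (Complex.I • cdub i)).prod

/-- The set `Λ^{p,p}_{+,w}V*` of weakly positive `(p,p)`-forms: `(p,p)`-forms `ω` such that
for every strongly positive `η` of type `(n-p,n-p)` there is a real `γ ≥ 0` with
`ω ∧ η = γ ω_n`. -/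
def cWeakPos (n p : ℕ) : Set (CForms n) :=
  { x | x ∈ CFormsPQ n p p ∧
      ∀ η ∈ cStrongPos n (n - p), ∃ γ : ℝ, 0 ≤ γ ∧ x * η = (γ : ℂ) • cOmegaTop n }

/-- `σ` is the complex conjugation of `Λ^{·,·}V*`: the (unique) antilinear multiplicative
involution of the ℝ-algebra `Λ^{·,·}V*` with `σ(du_i) = dū_i` and `σ(dū_i) = du_i`. -/
structure IsConjugation (n : ℕ) (σ : CForms n → CForms n) : Prop where
  map_add : ∀ x y, σ (x + y) = σ x + σ y
  map_smul : ∀ (c : ℂ) (x), σ (c • x) = (starRingEnd ℂ) c • σ x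
  map_mul : ∀ x y, σ (x * y) = σ x * σ y
  map_one : σ 1 = 1
  map_du : ∀ i : Fin n, σ (cdu i) = cdub i
  map_dub : ∀ i : Fin n, σ (cdub i) = cdu i

/-- `F` is the antilinear involution of the ℝ-algebra `Λ^{·,·}V*` determined by
`F(λ) = λ̄`, `F(du_i) = du_i` and `F(dū_i) = -dū_i`. -/
structure IsFInvolution (n : ℕ) (F : CForms n → CForms n) : Prop where
  map_add : ∀ x y, F (x + y) = F x + F y
  map_smul : ∀ (c : ℂ) (x), F (c • x) = (starRingEnd ℂ) c • F x
  map_mul : ∀ x y, F (x * y) = F x * F y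
  map_one : F 1 = 1
  map_du : ∀ i : Fin n, F (cdu i) = cdu i
  map_dub : ∀ i : Fin n, F (cdub i) = - cdub i

/-- The algebra `Λ^{·,·}V' = Λ_ℝ(V' ⊕ V'')` of Lagerberg forms for `V = ℝⁿ`. -/
abbrev LForms (n : ℕ) : Type := ExteriorAlgebra ℝ ((Fin n ⊕ Fin n) → ℝ)

/-- The basis element `d'u_i` of `V'`. -/
def ldu {n : ℕ} (i : Fin n) : LForms n := ExteriorAlgebra.ι ℝ (Pi.single (Sum.inl i) (1 : ℝ))

/-- The basis element `d''u_i` of `V''`. -/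
def lddu {n : ℕ} (i : Fin n) : LForms n := ExteriorAlgebra.ι ℝ (Pi.single (Sum.inr i) (1 : ℝ))

/-- A general element `Σ cᵢ • d'u_i` of `V'`. -/
def lOne {n : ℕ} (c : Fin n → ℝ) : LForms n := ∑ i, c i • ldu i

/-- A general element `Σ cᵢ • d''u_i` of `V''`; note `J(Σ cᵢ d'u_i) = Σ cᵢ d''u_i`. -/
def lOne'' {n : ℕ} (c : Fin n → ℝ) : LForms n := ∑ i, c i • lddu i

/-- A decomposable `(p,0)`-form `α₁ ∧ … ∧ α_p` with `α_j ∈ V'`. -/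
def lDecomp {n p : ℕ} (c : Fin p → Fin n → ℝ) : LForms n := (List.ofFn fun j => lOne (c j)).prod

/-- Its image `J(α₁) ∧ … ∧ J(α_p)` under the Lagerberg involution. -/
def lDecomp'' {n p : ℕ} (c : Fin p → Fin n → ℝ) : LForms n :=
  (List.ofFn fun j => lOne'' (c j)).prod

/-- `Λ^{p,q}V'`: the span of products of `p` elements of `V'` and `q` elements of `V''`. -/
def LFormsPQ (n p q : ℕ) : Submodule ℝ (LForms n) :=
  Submodule.span ℝ { x | ∃ (a : Fin p → Fin n → ℝ) (b : Fin q → Fin n → ℝ),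
    x = lDecomp a * lDecomp'' b }

/-- The convex cone generated by a set `S` (nonnegative real coefficients). -/
def lCone {n : ℕ} (S : Set (LForms n)) : Set (LForms n) :=
  { x | ∃ (m : ℕ) (t : Fin m → ℝ) (y : Fin m → LForms n),
      (∀ k, 0 ≤ t k) ∧ (∀ k, y k ∈ S) ∧ x = ∑ k, t k • y k }

/-- The generators `α₁ ∧ J(α₁) ∧ … ∧ α_p ∧ J(α_p)` (`α_j ∈ V'`) of the strongly positive
cone. -/
def lStrongGen (n p : ℕ) : Set (LForms n) :=
  { x | ∃ c : Fin p → Fin n → ℝ, x = (List.ofFn fun j => lOne (c j) * lOne'' (c j)).prod }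

/-- The cone `Λ^{p,p}_{+,s}V'` of strongly positive Lagerberg `(p,p)`-forms. -/
def lStrongPos (n p : ℕ) : Set (LForms n) := lCone (lStrongGen n p)

/-- The generators `(-1)^{p(p-1)/2} α ∧ J(α)` (`α ∈ Λ^{p,0}V'`, written as a sum of
decomposables) of the positive cone. -/
def lPosGen (n p : ℕ) : Set (LForms n) :=
  { x | ∃ (m : ℕ) (c : Fin m → Fin p → Fin n → ℝ),
      x = ((-1 : ℝ)) ^ (p * (p - 1) / 2) • ((∑ l, lDecomp (c l)) * (∑ l, lDecomp'' (c l))) }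

/-- The cone `Λ^{p,p}_{+}V'` of positive Lagerberg `(p,p)`-forms. -/
def lPos (n p : ℕ) : Set (LForms n) := lCone (lPosGen n p)

/-- The Lagerberg orientation form `τ_n = d'u_1 ∧ d''u_1 ∧ … ∧ d'u_n ∧ d''u_n`. -/
def lTauTop (n : ℕ) : LForms n := (List.ofFn fun i : Fin n => ldu i * lddu i).prod

/-- `J` is the Lagerberg involution: the (unique) ℝ-algebra automorphism of `Λ^{·,·}V'`
with `J(d'u_i) = d''u_i` and `J(d''u_i) = d'u_i`. -/
structure IsLagerbergJ (n : ℕ) (J : LForms n → LForms n) : Prop where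
  map_add : ∀ x y, J (x + y) = J x + J y
  map_smul : ∀ (c : ℝ) (x), J (c • x) = c • J x
  map_mul : ∀ x y, J (x * y) = J x * J y
  map_one : J 1 = 1
  map_du : ∀ i : Fin n, J (ldu i) = lddu i
  map_ddu : ∀ i : Fin n, J (lddu i) = ldu i

/-- The set `Λ^{p,p}_{sym}V'` of symmetric Lagerberg `(p,p)`-forms:
those with `J(ω) = (-1)^p ω`. -/
def lSym (n p : ℕ) (J : LForms n → LForms n) : Set (LForms n) :=
  { x | x ∈ LFormsPQ n p p ∧ J x = ((-1 : ℝ)) ^ p • x }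

/-- The set `Λ^{p,p}_{+,w}V'` of weakly positive Lagerberg `(p,p)`-forms: symmetric
`(p,p)`-forms `ω` such that for every strongly positive `η` of type `(n-p,n-p)` there is a
real `γ ≥ 0` with `ω ∧ η = γ τ_n`. -/
def lWeakPos (n p : ℕ) (J : LForms n → LForms n) : Set (LForms n) :=
  { x | x ∈ lSym n p J ∧
      ∀ η ∈ lStrongPos n (n - p), ∃ γ : ℝ, 0 ≤ γ ∧ x * η = γ • lTauTop n }

/-- `ι` is the canonical embedding `Λ^{·,·}V' → Λ^{·,·}V*`: the (unique) ℝ-algebra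
homomorphism with `ι(d'u_j) = du_j` and `ι(d''u_j) = i dū_j`.  Its image is the set of
`F`-invariant complex forms. -/
structure IsIota (n : ℕ) (ι : LForms n → CForms n) : Prop where
  map_add : ∀ x y, ι (x + y) = ι x + ι y
  map_smul : ∀ (c : ℝ) (x), ι (c • x) = (c : ℂ) • ι x
  map_mul : ∀ x y, ι (x * y) = ι x * ι y
  map_one : ι 1 = 1
  map_du : ∀ i : Fin n, ι (ldu i) = cdu i
  map_ddu : ∀ i : Fin n, ι (lddu i) = Complex.I • cdub i

/-! ### Auxiliary lemmas -/

section Aux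

variable {n p : ℕ}

lemma mapZeroOfAdd {A B : Type*} [AddCommMonoid A] [AddCommGroup B] (f : A → B)
    (hadd : ∀ x y, f (x + y) = f x + f y) : f 0 = 0 := by
  have h := hadd 0 0
  rw [add_zero] at h
  exact (left_eq_add.mp h)

lemma mapSumOfAdd {A B : Type*} [AddCommMonoid A] [AddCommGroup B] (f : A → B)
    (hadd : ∀ x y, f (x + y) = f x + f y)
    {κ : Type*} (s : Finset κ) (g : κ → A) :
    f (∑ i ∈ s, g i) = ∑ i ∈ s, f (g i) := by
  classical
  induction s using Finset.induction_on with
  | empty => simpa using mapZeroOfAdd f hadd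
  | insert _ _ hx ih => rw [Finset.sum_insert hx, Finset.sum_insert hx, hadd, ih]

lemma mapListProd {A B : Type*} [Monoid A] [Monoid B] (f : A → B)
    (h1 : f 1 = 1) (hm : ∀ x y, f (x * y) = f x * f y) :
    ∀ l : List A, f l.prod = (l.map f).prod
  | [] => by simpa
  | x :: l => by
      rw [List.prod_cons, hm, mapListProd f h1 hm l, List.map_cons, List.prod_cons]

lemma smulOfFnProd (s : ℂ) : ∀ {p : ℕ} (g : Fin p → CForms n),
    (List.ofFn fun j => s • g j).prod = s ^ p • (List.ofFn g).prod
  | 0, g => by simp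
  | p + 1, g => by
      rw [List.ofFn_succ, List.ofFn_succ, List.prod_cons, List.prod_cons,
        smulOfFnProd s (fun j => g j.succ), smul_mul_assoc, mul_smul_comm,
        smul_smul, pow_succ]
      ring_nf

variable {σ F : CForms n → CForms n} {J : LForms n → LForms n} {ι : LForms n → CForms n}

lemma lOne_smul (r : ℝ) (c : Fin n → ℝ) : lOne (r • c) = r • lOne c := by
  unfold lOne
  rw [Finset.smul_sum]
  refine Finset.sum_congr rfl fun i _ => ?_
  rw [Pi.smul_apply, smul_smul]
  rfl

lemma iota_lOne (hι : IsIota n ι) (c : Fin n → ℝ) :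
    ι (lOne c) = ∑ i, (c i : ℂ) • cdu i := by
  unfold lOne
  rw [mapSumOfAdd ι hι.map_add]
  refine Finset.sum_congr rfl fun i _ => ?_
  rw [hι.map_smul, hι.map_du]

lemma iota_lOne'' (hι : IsIota n ι) (c : Fin n → ℝ) :
    ι (lOne'' c) = Complex.I • ∑ i, (c i : ℂ) • cdub i := by
  unfold lOne''
  rw [mapSumOfAdd ι hι.map_add, Finset.smul_sum]
  refine Finset.sum_congr rfl fun i _ => ?_
  rw [hι.map_smul, hι.map_ddu, smul_smul, smul_smul, mul_comm]

lemma J_lOne (hJ : IsLagerbergJ n J) (c : Fin n → ℝ) : J (lOne c) = lOne'' c := by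
  unfold lOne lOne''
  rw [mapSumOfAdd J hJ.map_add]
  refine Finset.sum_congr rfl fun i _ => ?_
  rw [hJ.map_smul, hJ.map_du]

lemma sigma_iota_lOne (hσ : IsConjugation n σ) (hι : IsIota n ι) (c : Fin n → ℝ) :
    σ (ι (lOne c)) = (-Complex.I) • ι (lOne'' c) := by
  rw [iota_lOne hι, iota_lOne'' hι, mapSumOfAdd σ hσ.map_add, smul_smul]
  have : -Complex.I * Complex.I = 1 := by
    rw [neg_mul, Complex.I_mul_I, neg_neg]
  rw [this, one_smul]
  refine Finset.sum_congr rfl fun i _ => ?_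
  rw [hσ.map_smul, hσ.map_du, Complex.conj_ofReal]

lemma iota_lDecomp (hι : IsIota n ι) (c : Fin p → Fin n → ℝ) :
    ι (lDecomp c) = (List.ofFn fun j => ι (lOne (c j))).prod := by
  unfold lDecomp
  rw [mapListProd ι hι.map_one hι.map_mul, List.map_ofFn]
  rfl

lemma iota_lDecomp'' (hι : IsIota n ι) (c : Fin p → Fin n → ℝ) :
    ι (lDecomp'' c) = (List.ofFn fun j => ι (lOne'' (c j))).prod := by
  unfold lDecomp''
  rw [mapListProd ι hι.map_one hι.map_mul, List.map_ofFn]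
  rfl

lemma J_lDecomp (hJ : IsLagerbergJ n J) (c : Fin p → Fin n → ℝ) :
    J (lDecomp c) = lDecomp'' c := by
  unfold lDecomp lDecomp''
  rw [mapListProd J hJ.map_one hJ.map_mul, List.map_ofFn]
  have h1 : (J ∘ fun j => lOne (c j)) = fun j => lOne'' (c j) := by
    funext j
    exact J_lOne hJ (c j)
  rw [h1]

lemma sigma_iota_lDecomp (hσ : IsConjugation n σ) (hι : IsIota n ι)
    (c : Fin p → Fin n → ℝ) :
    σ (ι (lDecomp c)) = (-Complex.I) ^ p • ι (lDecomp'' c) := by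
  rw [iota_lDecomp hι, mapListProd σ hσ.map_one hσ.map_mul, List.map_ofFn]
  have h1 : ((fun x => σ x) ∘ fun j => ι (lOne (c j))) =
      fun j => (-Complex.I) • ι (lOne'' (c j)) := by
    funext j
    exact sigma_iota_lOne hσ hι (c j)
  rw [h1, smulOfFnProd, iota_lDecomp'' hι]

/-- `σ ∘ ι = (-i)^p • ι ∘ J` on `Λ^{p,0}V'`. -/
lemma sigma_iota (hσ : IsConjugation n σ) (hι : IsIota n ι) (hJ : IsLagerbergJ n J)
    {x : LForms n} (hx : x ∈ LFormsPQ n p 0) :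
    σ (ι x) = (-Complex.I) ^ p • ι (J x) := by
  refine Submodule.span_induction (p := fun x _ => σ (ι x) = (-Complex.I) ^ p • ι (J x))
    ?_ ?_ ?_ ?_ hx
  · rintro x ⟨c, b, rfl⟩
    have hb : lDecomp'' b = 1 := by
      unfold lDecomp''
      simp
    show σ (ι (lDecomp c * lDecomp'' b)) =
      (-Complex.I) ^ p • ι (J (lDecomp c * lDecomp'' b))
    rw [hb, mul_one, J_lDecomp hJ, sigma_iota_lDecomp hσ hι]
  · show σ (ι (0 : LForms n)) = (-Complex.I) ^ p • ι (J 0)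
    rw [mapZeroOfAdd ι hι.map_add, mapZeroOfAdd σ hσ.map_add,
      mapZeroOfAdd J hJ.map_add, mapZeroOfAdd ι hι.map_add, smul_zero]
  · intro x y _ _ hx hy
    show σ (ι (x + y)) = (-Complex.I) ^ p • ι (J (x + y))
    rw [hι.map_add, hσ.map_add, hx, hy, hJ.map_add, hι.map_add, smul_add]
  · intro r x _ hx
    show σ (ι (r • x)) = (-Complex.I) ^ p • ι (J (r • x))
    rw [hι.map_smul, hσ.map_smul, hx, hJ.map_smul, hι.map_smul, Complex.conj_ofReal,
      smul_comm]

/-- `F ∘ ι = ι`. -/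
lemma F_iota (hF : IsFInvolution n F) (hι : IsIota n ι) (x : LForms n) :
    F (ι x) = ι x := by
  induction x using ExteriorAlgebra.induction with
  | algebraMap r =>
      rw [Algebra.algebraMap_eq_smul_one, hι.map_smul, hF.map_smul, Complex.conj_ofReal,
        hι.map_one, hF.map_one]
  | ι m =>
      have hm : (ExteriorAlgebra.ι ℝ) m =
          ∑ k : Fin n ⊕ Fin n, m k • (ExteriorAlgebra.ι ℝ) (Pi.single k (1 : ℝ)) := by
        conv_lhs => rw [pi_eq_sum_univ m]
        rw [map_sum]
        refine Finset.sum_congr rfl fun k _ => ?_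
        rw [map_smul]
        have h2 : (fun j => if k = j then (1:ℝ) else 0) = Pi.single k (1:ℝ) := by
          funext j
          simp [Pi.single_apply, eq_comm]
        rw [h2]
      rw [hm, mapSumOfAdd ι hι.map_add, mapSumOfAdd F hF.map_add]
      refine Finset.sum_congr rfl fun k _ => ?_
      rw [hι.map_smul, hF.map_smul, Complex.conj_ofReal]
      congr 1
      rcases k with i | i
      · rw [show (ExteriorAlgebra.ι ℝ) (Pi.single (Sum.inl i) (1:ℝ)) = ldu i from rfl,
          hι.map_du, hF.map_du]
      · rw [show (ExteriorAlgebra.ι ℝ) (Pi.single (Sum.inr i) (1:ℝ)) = lddu i from rfl,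
          hι.map_ddu, hF.map_smul, hF.map_dub, Complex.conj_I, neg_smul, smul_neg,
          neg_neg]
  | mul x y hx hy => rw [hι.map_mul, hF.map_mul, hx, hy]
  | add x y hx hy => rw [hι.map_add, hF.map_add, hx, hy]

lemma smul_lDecomp (hp : p ≠ 0) (r : ℝ) (c : Fin p → Fin n → ℝ) :
    r • lDecomp c =
      lDecomp (Function.update c ⟨0, Nat.pos_of_ne_zero hp⟩
        (r • c ⟨0, Nat.pos_of_ne_zero hp⟩)) := by
  obtain ⟨q, rfl⟩ := Nat.exists_eq_succ_of_ne_zero hp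
  unfold lDecomp
  rw [List.ofFn_succ, List.ofFn_succ, List.prod_cons, List.prod_cons]
  have h0 : (⟨0, Nat.pos_of_ne_zero hp⟩ : Fin (q + 1)) = 0 := rfl
  rw [h0]
  have h1 : (fun j : Fin q => lOne (Function.update c 0 (r • c 0) j.succ)) =
      fun j : Fin q => lOne (c j.succ) := by
    funext j
    rw [Function.update_of_ne (Fin.succ_ne_zero j)]
  rw [h1, Function.update_self, lOne_smul, smul_mul_assoc]

/-- Every element of `Λ^{p,0}V'` with `p ≥ 1` is a sum of decomposables. -/
lemma decomp_sum (hp : p ≠ 0) {x : LForms n} (hx : x ∈ LFormsPQ n p 0) :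
    ∃ (m : ℕ) (c : Fin m → Fin p → Fin n → ℝ), x = ∑ l, lDecomp (c l) := by
  refine Submodule.span_induction
    (p := fun x _ => ∃ (m : ℕ) (c : Fin m → Fin p → Fin n → ℝ), x = ∑ l, lDecomp (c l))
    ?_ ?_ ?_ ?_ hx
  · rintro x ⟨c, b, rfl⟩
    have hb : lDecomp'' b = 1 := by
      unfold lDecomp''
      simp
    exact ⟨1, fun _ => c, by rw [hb, mul_one, Fin.sum_univ_one]⟩
  · exact ⟨0, fun l => l.elim0, by simp⟩
  · rintro x y _ _ ⟨m₁, c₁, rfl⟩ ⟨m₂, c₂, rfl⟩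
    refine ⟨m₁ + m₂, Fin.append c₁ c₂, ?_⟩
    rw [Fin.sum_univ_add]
    simp [Fin.append_left, Fin.append_right]
  · rintro r x _ ⟨m, c, rfl⟩
    refine ⟨m, fun l => Function.update (c l) ⟨0, Nat.pos_of_ne_zero hp⟩
      (r • c l ⟨0, Nat.pos_of_ne_zero hp⟩), ?_⟩
    rw [Finset.smul_sum]
    exact Finset.sum_congr rfl fun l _ => smul_lDecomp hp r (c l)

/-- Every element of `Λ^{0,0}V'` is a real multiple of `1`. -/
lemma decomp_zero {x : LForms n} (hx : x ∈ LFormsPQ n 0 0) :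
    ∃ r : ℝ, x = r • (1 : LForms n) := by
  refine Submodule.span_induction (p := fun x _ => ∃ r : ℝ, x = r • (1 : LForms n))
    ?_ ?_ ?_ ?_ hx
  · rintro x ⟨c, b, rfl⟩
    exact ⟨1, by simp [lDecomp, lDecomp'']⟩
  · exact ⟨0, by simp⟩
  · rintro x y _ _ ⟨r, rfl⟩ ⟨s, rfl⟩
    exact ⟨r + s, by rw [add_smul]⟩
  · rintro r x _ ⟨s, rfl⟩
    exact ⟨r * s, by rw [smul_smul]⟩

end Aux

set_option maxHeartbeats 1000000 in
/-- key claim in the proof of Proposition 2.17.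
Let `α ∈ Λ^{p,0}V*` and write `α = ι(a) + i·ι(b)` with `a, b ∈ Λ^{p,0}V'`.  Then for
`η = (-1)^{p(p-1)/2} α ∧ i^p ᾱ ∈ Λ^{p,p}V*` one has
`η + F(η) = 2·ι((-1)^{p(p-1)/2}(a ∧ J(a) + b ∧ J(b)))`; in particular `η + F(η)` is the
image under `ι` of a positive Lagerberg form. -/
theorem eta_plus_F_eta_is_positive_lagerberg (n p : ℕ)
    (σ : CForms n → CForms n) (hσ : IsConjugation n σ)
    (F : CForms n → CForms n) (hF : IsFInvolution n F)
    (J : LForms n → LForms n) (hJ : IsLagerbergJ n J)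
    (ι : LForms n → CForms n) (hι : IsIota n ι)
    (a b : LForms n) (ha : a ∈ LFormsPQ n p 0) (hb : b ∈ LFormsPQ n p 0)
    (α : CForms n) (hα : α = ι a + Complex.I • ι b)
    (η : CForms n)
    (hη : η = ((-1 : ℂ)) ^ (p * (p - 1) / 2) • (α * (Complex.I ^ p • σ α))) :
    η + F η =
      (2 : ℂ) • ι (((-1 : ℝ)) ^ (p * (p - 1) / 2) • (a * J a + b * J b)) ∧
    ∃ γ ∈ lPos n p, η + F η = ι γ := by
  have hFι := F_iota hF hι
  have h1 : Complex.I ^ p * (-Complex.I) ^ p = 1 := by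
    rw [← mul_pow, mul_neg, Complex.I_mul_I, neg_neg, one_pow]
  have hσα : Complex.I ^ p • σ α = ι (J a) + (-Complex.I) • ι (J b) := by
    rw [hα, hσ.map_add, hσ.map_smul, Complex.conj_I,
      sigma_iota hσ hι hJ ha, sigma_iota hσ hι hJ hb]
    rw [smul_add]
    simp only [smul_smul]
    have h2 : Complex.I ^ p * (-Complex.I * (-Complex.I) ^ p) = -Complex.I := by
      rw [mul_comm (-Complex.I), ← mul_assoc, h1, one_mul]
    rw [h1, h2, one_smul]
  have hprod : α * (Complex.I ^ p • σ α) =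
      (ι a * ι (J a) + ι b * ι (J b)) +
        ((-Complex.I) • (ι a * ι (J b)) + Complex.I • (ι b * ι (J a))) := by
    rw [hσα, hα, add_mul, mul_add, mul_add]
    simp only [smul_mul_assoc, mul_smul_comm, smul_smul]
    rw [neg_mul, Complex.I_mul_I, neg_neg, one_smul]
    abel
  have hFprod : F (α * (Complex.I ^ p • σ α)) =
      (ι a * ι (J a) + ι b * ι (J b)) +
        (Complex.I • (ι a * ι (J b)) + (-Complex.I) • (ι b * ι (J a))) := by
    rw [hprod, hF.map_add, hF.map_add, hF.map_add, hF.map_smul, hF.map_smul]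
    simp only [hF.map_mul, hFι, map_neg, Complex.conj_I, neg_neg]
  have hconj : (starRingEnd ℂ) ((-1 : ℂ) ^ (p * (p - 1) / 2)) =
      (-1 : ℂ) ^ (p * (p - 1) / 2) := by simp
  have key : η + F η =
      (2 : ℂ) • ((-1 : ℂ) ^ (p * (p - 1) / 2) • (ι a * ι (J a) + ι b * ι (J b))) := by
    rw [hη, hF.map_smul, hconj, hFprod, hprod]
    module
  have main1 : η + F η =
      (2 : ℂ) • ι (((-1 : ℝ)) ^ (p * (p - 1) / 2) • (a * J a + b * J b)) := by
    rw [key, hι.map_smul, hι.map_add, hι.map_mul, hι.map_mul]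
    norm_cast
  refine ⟨main1, (2 : ℝ) • (((-1 : ℝ)) ^ (p * (p - 1) / 2) • (a * J a + b * J b)),
    ?_, ?_⟩
  · -- membership in the positive cone
    by_cases hp : p = 0
    · subst hp
      obtain ⟨r, rfl⟩ := decomp_zero ha
      obtain ⟨s, rfl⟩ := decomp_zero hb
      refine ⟨1, fun _ => 2 * (r ^ 2 + s ^ 2), fun _ => 1, fun _ => by positivity,
        fun _ => ?_, ?_⟩
      · exact ⟨1, fun _ => Fin.elim0, by simp [lDecomp, lDecomp'']⟩
      · rw [Fin.sum_univ_one, hJ.map_smul, hJ.map_smul, hJ.map_one]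
        have hmul : ∀ u v : ℝ, (u • (1 : LForms n)) * (v • 1) = (u * v) • 1 := by
          intro u v
          rw [smul_mul_assoc, one_mul, smul_smul]
        rw [hmul, hmul]
        have hk0 : (0 * (0 - 1) / 2 : ℕ) = 0 := rfl
        rw [hk0, pow_zero]
        module
    · obtain ⟨m₁, c₁, rfl⟩ := decomp_sum hp ha
      obtain ⟨m₂, c₂, rfl⟩ := decomp_sum hp hb
      refine ⟨2, ![2, 2],
        ![((-1 : ℝ)) ^ (p * (p - 1) / 2) •
            ((∑ l, lDecomp (c₁ l)) * (∑ l, lDecomp'' (c₁ l))),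
          ((-1 : ℝ)) ^ (p * (p - 1) / 2) •
            ((∑ l, lDecomp (c₂ l)) * (∑ l, lDecomp'' (c₂ l)))], ?_, ?_, ?_⟩
      · intro k
        fin_cases k <;> norm_num
      · intro k
        fin_cases k
        · refine ⟨m₁, c₁, ?_⟩
          simp
        · refine ⟨m₂, c₂, ?_⟩
          simp
      · rw [Fin.sum_univ_two]
        simp only [Matrix.cons_val_zero, Matrix.cons_val_one, Matrix.head_cons]
        rw [mapSumOfAdd J hJ.map_add, mapSumOfAdd J hJ.map_add]
        simp only [J_lDecomp hJ]
        module
  · rw [main1, hι.map_smul ((2 : ℝ))]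
    norm_num
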